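/- The iterated limit lim_{m→∞} lim_{n→∞} LEL(UJL(n,m)) / (2mn) exists and equals (1/(8π²)) ∫₀^{2π} ∫₀^{2π} [ √(F(x,y) + √(F(x,y)² − 4·H(x,y))) + √(F(x,y) − √(F(x,y)² − 4·H(x,y))) ] dx dy, where F(x,y) = 6 − cos x − cos y and H(x,y) = 7 − 3 cos x − 3 cos y − cos x · cos y. -/

import Mathlib

open scoped Classical

noncomputable section

/-- Vertex set of the Union Jack lattice `UJL(n,m)`: the first summand consists of the
"grid vertices" of the `n × m` toroidal square lattice, the second summand of the
"face vertices" inserted in each face. -/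
abbrev UJLVert (n m : ℕ) : Type := (ZMod n × ZMod m) ⊕ (ZMod n × ZMod m)

/-- Base adjacency relation of the Union Jack lattice (to be symmetrized):
grid vertex `(i,j)` is related to the grid vertices `(i+1,j)` and `(i,j+1)`
(symmetrization yields all four grid neighbours `(i±1,j)`, `(i,j±1)`), and the
grid vertex `(i,j)` is related to the face vertices `(i,j)`, `(i-1,j)`, `(i,j-1)`,
`(i-1,j-1)`, i.e. the face vertex `(k,l)` is adjacent to the grid vertices
`(k,l)`, `(k+1,l)`, `(k,l+1)`, `(k+1,l+1)`. -/
def UJLRel (n m : ℕ) : UJLVert n m → UJLVert n m → Prop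
  | Sum.inl p, Sum.inl q => (q.1 = p.1 + 1 ∧ q.2 = p.2) ∨ (q.1 = p.1 ∧ q.2 = p.2 + 1)
  | Sum.inl p, Sum.inr q =>
      (q.1 = p.1 ∧ q.2 = p.2) ∨ (q.1 = p.1 - 1 ∧ q.2 = p.2) ∨
        (q.1 = p.1 ∧ q.2 = p.2 - 1) ∨ (q.1 = p.1 - 1 ∧ q.2 = p.2 - 1)
  | _, _ => False

/-- The Union Jack lattice `UJL(n,m)` with toroidal boundary condition. -/
def UJL (n m : ℕ) : SimpleGraph (UJLVert n m) := SimpleGraph.fromRel (UJLRel n m)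

/-- `cos α_i` where `α_i = 2 π i / n`. -/
def cosα (n i : ℕ) : ℝ := Real.cos (2 * Real.pi * i / n)

/-- The Laplacian matrix `L(UJL(n,m)) = D(UJL(n,m)) - A(UJL(n,m))`. -/
def laplacianUJL (n m : ℕ) [NeZero n] [NeZero m] :
    Matrix (UJLVert n m) (UJLVert n m) ℝ :=
  Matrix.diagonal (fun v => ((UJL n m).degree v : ℝ)) - (UJL n m).adjMatrix ℝ

/-- The Laplacian-energy-like invariant of `UJL(n,m)` (sum of the square roots of the
eigenvalues of the Laplacian `L(UJL(n,m))`, counted with multiplicity as roots of the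
characteristic polynomial), extended by the junk value `0` when `n = 0` or `m = 0`. -/
def LEL_UJL (n m : ℕ) : ℝ :=
  if h : n = 0 ∨ m = 0 then 0
  else
    haveI : NeZero n := ⟨fun hn => h (Or.inl hn)⟩
    haveI : NeZero m := ⟨fun hm => h (Or.inr hm)⟩
    ((laplacianUJL n m).charpoly.roots.map Real.sqrt).sum

open Polynomial Filter Finset Matrix Complex Sum Real Topology

-- character lemmas
lemma zmod_char_sum (N : ℕ) [NeZero N] (t : ZMod N) :
    ∑ i : ZMod N, ZMod.stdAddChar (t * i) = if t = 0 then (N : ℂ) else 0 := by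
  split_ifs with h
  · simp [h, ZMod.card]
  · simpa using AddChar.sum_eq_zero_of_ne_one (ZMod.isPrimitive_stdAddChar N h)

lemma stdAddChar_eq (N : ℕ) [NeZero N] (j : ZMod N) :
    ZMod.stdAddChar j = Complex.exp (2 * Real.pi * Complex.I * j.val / N) := by
  conv_lhs => rw [show j = (((j.val : ℤ)) : ZMod N) by push_cast [ZMod.natCast_val]; simp]
  rw [ZMod.stdAddChar_coe]
  norm_num

lemma stdAddChar_neg_eq (N : ℕ) [NeZero N] (j : ZMod N) :
    ZMod.stdAddChar (-j) = Complex.exp (-(2 * Real.pi * Complex.I * j.val / N)) := by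
  have h : -j = ((Int.cast (-(j.val : ℤ)) : ZMod N)) := by push_cast [ZMod.natCast_val]; simp
  rw [h, ZMod.stdAddChar_coe]
  push_cast
  ring_nf

lemma char_add_neg (N : ℕ) [NeZero N] (j : ZMod N) :
    ZMod.stdAddChar j + ZMod.stdAddChar (-j) = ((2 * Real.cos (2 * Real.pi * j.val / N) : ℝ) : ℂ) := by
  rw [stdAddChar_eq, stdAddChar_neg_eq]
  rw [show (2 * Real.pi * Complex.I * j.val / N) = ((2 * Real.pi * j.val / N : ℝ) : ℂ) * Complex.I by push_cast; ring]
  rw [Complex.exp_mul_I, ← neg_mul, Complex.exp_mul_I]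
  push_cast [Complex.cos_neg, Complex.sin_neg, Complex.ofReal_cos]
  ring

-- simp lemmas for UJLRel
@[simp] lemma UJLRel_inl_inl {n m : ℕ} (p q : ZMod n × ZMod m) :
    UJLRel n m (inl p) (inl q) ↔
      ((q.1 = p.1 + 1 ∧ q.2 = p.2) ∨ (q.1 = p.1 ∧ q.2 = p.2 + 1)) := Iff.rfl
@[simp] lemma UJLRel_inl_inr {n m : ℕ} (p q : ZMod n × ZMod m) :
    UJLRel n m (inl p) (inr q) ↔
      ((q.1 = p.1 ∧ q.2 = p.2) ∨ (q.1 = p.1 - 1 ∧ q.2 = p.2) ∨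
        (q.1 = p.1 ∧ q.2 = p.2 - 1) ∨ (q.1 = p.1 - 1 ∧ q.2 = p.2 - 1)) := Iff.rfl
@[simp] lemma UJLRel_inr {n m : ℕ} (p : ZMod n × ZMod m) (w : UJLVert n m) :
    UJLRel n m (inr p) w ↔ False := by cases w <;> exact Iff.rfl

lemma zmod_one_ne_zero {n : ℕ} (hn : 2 ≤ n) : (1 : ZMod n) ≠ 0 := by
  haveI : Fact (1 < n) := ⟨hn⟩
  exact one_ne_zero

lemma zmod_two_ne_zero {n : ℕ} (hn : 3 ≤ n) : (2 : ZMod n) ≠ 0 := by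
  have : ((2 : ℕ) : ZMod n) ≠ 0 := by
    rw [Ne, ZMod.natCast_eq_zero_iff]
    intro h
    have := Nat.le_of_dvd (by norm_num) h
    omega
  simpa using this

lemma zmod_add_one_ne {n : ℕ} (hn : 2 ≤ n) (a : ZMod n) : a + 1 ≠ a := by
  simp [zmod_one_ne_zero hn]

lemma zmod_sub_one_ne {n : ℕ} (hn : 2 ≤ n) (a : ZMod n) : a - 1 ≠ a := by
  intro h
  have : (1 : ZMod n) = 0 := by linear_combination -h
  exact zmod_one_ne_zero hn this

lemma zmod_add_ne_sub {n : ℕ} (hn : 3 ≤ n) (a : ZMod n) : a + 1 ≠ a - 1 := by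
  intro h
  have : (2 : ZMod n) = 0 := by linear_combination h
  exact zmod_two_ne_zero hn this

lemma adj_inl_inl {n m : ℕ} (hn : 2 ≤ n) (hm : 2 ≤ m) (p q : ZMod n × ZMod m) :
    (UJL n m).Adj (inl p) (inl q) ↔
      (q = (p.1 + 1, p.2) ∨ q = (p.1 - 1, p.2) ∨ q = (p.1, p.2 + 1) ∨ q = (p.1, p.2 - 1)) := by
  rw [UJL, SimpleGraph.fromRel_adj]
  constructor
  · rintro ⟨hne, (⟨h1, h2⟩ | ⟨h1, h2⟩) | (⟨h1, h2⟩ | ⟨h1, h2⟩)⟩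
    · exact Or.inl (Prod.ext h1 h2)
    · exact Or.inr (Or.inr (Or.inl (Prod.ext h1 h2)))
    · exact Or.inr (Or.inl (Prod.ext (by rw [h1]; ring) h2.symm))
    · exact Or.inr (Or.inr (Or.inr (Prod.ext h1.symm (by rw [h2]; ring))))
  · rintro (rfl | rfl | rfl | rfl)
    · exact ⟨by simp [Prod.ext_iff, (zmod_add_one_ne hn p.1).symm],
        Or.inl (Or.inl ⟨rfl, rfl⟩)⟩
    · exact ⟨by simp [Prod.ext_iff, (zmod_sub_one_ne hn p.1).symm],
        Or.inr (Or.inl ⟨by ring, rfl⟩)⟩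
    · exact ⟨by simp [Prod.ext_iff, (zmod_add_one_ne hm p.2).symm],
        Or.inl (Or.inr ⟨rfl, rfl⟩)⟩
    · exact ⟨by simp [Prod.ext_iff, (zmod_sub_one_ne hm p.2).symm],
        Or.inr (Or.inr ⟨rfl, by ring⟩)⟩

lemma adj_inl_inr {n m : ℕ} (p q : ZMod n × ZMod m) :
    (UJL n m).Adj (inl p) (inr q) ↔
      (q = p ∨ q = (p.1 - 1, p.2) ∨ q = (p.1, p.2 - 1) ∨ q = (p.1 - 1, p.2 - 1)) := by
  rw [UJL, SimpleGraph.fromRel_adj]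
  simp only [UJLRel_inl_inr, UJLRel_inr, or_false, iff_false, reduceCtorEq, Ne, not_false_iff,
    true_and, false_or]
  constructor
  · rintro (⟨h1, h2⟩ | ⟨h1, h2⟩ | ⟨h1, h2⟩ | ⟨h1, h2⟩)
    · exact Or.inl (Prod.ext h1 h2)
    · exact Or.inr (Or.inl (Prod.ext h1 h2))
    · exact Or.inr (Or.inr (Or.inl (Prod.ext h1 h2)))
    · exact Or.inr (Or.inr (Or.inr (Prod.ext h1 h2)))
  · rintro (rfl | rfl | rfl | rfl)
    · exact Or.inl ⟨rfl, rfl⟩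
    · exact Or.inr (Or.inl ⟨rfl, rfl⟩)
    · exact Or.inr (Or.inr (Or.inl ⟨rfl, rfl⟩))
    · exact Or.inr (Or.inr (Or.inr ⟨rfl, rfl⟩))

lemma adj_inr_inl {n m : ℕ} (p q : ZMod n × ZMod m) :
    (UJL n m).Adj (inr p) (inl q) ↔
      (q = p ∨ q = (p.1 + 1, p.2) ∨ q = (p.1, p.2 + 1) ∨ q = (p.1 + 1, p.2 + 1)) := by
  rw [SimpleGraph.adj_comm, adj_inl_inr]
  constructor
  · rintro (rfl | rfl | rfl | rfl)
    · exact Or.inl rfl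
    · exact Or.inr (Or.inl (Prod.ext (by simp) rfl))
    · exact Or.inr (Or.inr (Or.inl (Prod.ext rfl (by simp))))
    · exact Or.inr (Or.inr (Or.inr (Prod.ext (by simp) (by simp))))
  · rintro (rfl | rfl | rfl | rfl)
    · exact Or.inl rfl
    · exact Or.inr (Or.inl (Prod.ext (by simp) rfl))
    · exact Or.inr (Or.inr (Or.inl (Prod.ext rfl (by simp))))
    · exact Or.inr (Or.inr (Or.inr (Prod.ext (by simp) (by simp))))

lemma adj_inr_inr {n m : ℕ} (p q : ZMod n × ZMod m) :
    ¬ (UJL n m).Adj (inr p) (inr q) := by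
  rw [UJL, SimpleGraph.fromRel_adj]
  simp

section distinct
variable {n m : ℕ}

lemma grid_neighbors_distinct (hn : 3 ≤ n) (hm : 3 ≤ m) (p : ZMod n × ZMod m) :
    ((p.1 + 1, p.2) : ZMod n × ZMod m) ≠ (p.1 - 1, p.2) ∧
    ((p.1 + 1, p.2) : ZMod n × ZMod m) ≠ (p.1, p.2 + 1) ∧
    ((p.1 + 1, p.2) : ZMod n × ZMod m) ≠ (p.1, p.2 - 1) ∧
    ((p.1 - 1, p.2) : ZMod n × ZMod m) ≠ (p.1, p.2 + 1) ∧
    ((p.1 - 1, p.2) : ZMod n × ZMod m) ≠ (p.1, p.2 - 1) ∧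
    ((p.1, p.2 + 1) : ZMod n × ZMod m) ≠ (p.1, p.2 - 1) := by
  have hn1 : (1 : ZMod n) ≠ 0 := zmod_one_ne_zero (by omega)
  have hm1 : (1 : ZMod m) ≠ 0 := zmod_one_ne_zero (by omega)
  have hn2 : (2 : ZMod n) ≠ 0 := zmod_two_ne_zero hn
  have hm2 : (2 : ZMod m) ≠ 0 := zmod_two_ne_zero hm
  refine ⟨fun h => hn2 ?_, fun h => hn1 ?_, fun h => hn1 ?_, fun h => hn1 ?_,
    fun h => hn1 ?_, fun h => hm2 ?_⟩
  · have h1 : p.1 + 1 = p.1 - 1 := congrArg Prod.fst h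
    linear_combination h1
  · have h1 : p.1 + 1 = p.1 := congrArg Prod.fst h
    linear_combination h1
  · have h1 : p.1 + 1 = p.1 := congrArg Prod.fst h
    linear_combination h1
  · have h1 : p.1 - 1 = p.1 := congrArg Prod.fst h
    linear_combination -h1
  · have h1 : p.1 - 1 = p.1 := congrArg Prod.fst h
    linear_combination -h1
  · have h1 : p.2 + 1 = p.2 - 1 := congrArg Prod.snd h
    linear_combination h1

lemma face_neighbors_distinct (hn : 3 ≤ n) (hm : 3 ≤ m) (p : ZMod n × ZMod m) :
    (p ≠ (p.1 - 1, p.2)) ∧ (p ≠ (p.1, p.2 - 1)) ∧ (p ≠ (p.1 - 1, p.2 - 1)) ∧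
    (((p.1 - 1, p.2) : ZMod n × ZMod m) ≠ (p.1, p.2 - 1)) ∧
    (((p.1 - 1, p.2) : ZMod n × ZMod m) ≠ (p.1 - 1, p.2 - 1)) ∧
    (((p.1, p.2 - 1) : ZMod n × ZMod m) ≠ (p.1 - 1, p.2 - 1)) := by
  have hn1 : (1 : ZMod n) ≠ 0 := zmod_one_ne_zero (by omega)
  have hm1 : (1 : ZMod m) ≠ 0 := zmod_one_ne_zero (by omega)
  refine ⟨fun h => hn1 ?_, fun h => hm1 ?_, fun h => hn1 ?_, fun h => hn1 ?_,
    fun h => hm1 ?_, fun h => hn1 ?_⟩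
  · have h1 : p.1 = p.1 - 1 := congrArg Prod.fst h
    linear_combination h1
  · have h1 : p.2 = p.2 - 1 := congrArg Prod.snd h
    linear_combination h1
  · have h1 : p.1 = p.1 - 1 := congrArg Prod.fst h
    linear_combination h1
  · have h1 : p.1 - 1 = p.1 := congrArg Prod.fst h
    linear_combination -h1
  · have h1 : p.2 = p.2 - 1 := congrArg Prod.snd h
    linear_combination h1
  · have h1 : p.1 = p.1 - 1 := congrArg Prod.fst h
    linear_combination h1

lemma face_neighbors_distinct' (hn : 3 ≤ n) (hm : 3 ≤ m) (p : ZMod n × ZMod m) :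
    (p ≠ (p.1 + 1, p.2)) ∧ (p ≠ (p.1, p.2 + 1)) ∧ (p ≠ (p.1 + 1, p.2 + 1)) ∧
    (((p.1 + 1, p.2) : ZMod n × ZMod m) ≠ (p.1, p.2 + 1)) ∧
    (((p.1 + 1, p.2) : ZMod n × ZMod m) ≠ (p.1 + 1, p.2 + 1)) ∧
    (((p.1, p.2 + 1) : ZMod n × ZMod m) ≠ (p.1 + 1, p.2 + 1)) := by
  have hn1 : (1 : ZMod n) ≠ 0 := zmod_one_ne_zero (by omega)
  have hm1 : (1 : ZMod m) ≠ 0 := zmod_one_ne_zero (by omega)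
  refine ⟨fun h => hn1 ?_, fun h => hm1 ?_, fun h => hn1 ?_, fun h => hn1 ?_,
    fun h => hm1 ?_, fun h => hn1 ?_⟩
  · have h1 : p.1 = p.1 + 1 := congrArg Prod.fst h
    linear_combination -h1
  · have h1 : p.2 = p.2 + 1 := congrArg Prod.snd h
    linear_combination -h1
  · have h1 : p.1 = p.1 + 1 := congrArg Prod.fst h
    linear_combination -h1
  · have h1 : p.1 + 1 = p.1 := congrArg Prod.fst h
    linear_combination h1
  · have h1 : p.2 = p.2 + 1 := congrArg Prod.snd h
    linear_combination -h1
  · have h1 : p.1 = p.1 + 1 := congrArg Prod.fst h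
    linear_combination -h1

end distinct

set_option maxHeartbeats 1000000 in
lemma degree_eq_sum {n m : ℕ} [NeZero n] [NeZero m] (v : UJLVert n m) :
    ((UJL n m).degree v : ℝ) = ∑ w : UJLVert n m, if (UJL n m).Adj v w then (1 : ℝ) else 0 := by
  rw [← SimpleGraph.card_neighborFinset_eq_degree, SimpleGraph.neighborFinset_eq_filter]
  rw [Finset.card_filter]
  push_cast
  simp

set_option maxHeartbeats 1000000 in
lemma degree_inl {n m : ℕ} [NeZero n] [NeZero m] (hn : 3 ≤ n) (hm : 3 ≤ m)
    (p : ZMod n × ZMod m) : ((UJL n m).degree (inl p) : ℝ) = 8 := by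
  rw [degree_eq_sum, Fintype.sum_sum_type]
  obtain ⟨d1, d2, d3, d4, d5, d6⟩ := grid_neighbors_distinct hn hm p
  obtain ⟨e1, e2, e3, e4, e5, e6⟩ := face_neighbors_distinct hn hm p
  have h1 : ∀ w : ZMod n × ZMod m, (if (UJL n m).Adj (inl p) (inl w) then (1:ℝ) else 0) =
      (if w = (p.1 + 1, p.2) then (1:ℝ) else 0) + (if w = (p.1 - 1, p.2) then 1 else 0) +
        (if w = (p.1, p.2 + 1) then 1 else 0) + (if w = (p.1, p.2 - 1) then 1 else 0) := by
    intro w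
    by_cases c1 : w = (p.1 + 1, p.2) <;> by_cases c2 : w = (p.1 - 1, p.2) <;>
      by_cases c3 : w = (p.1, p.2 + 1) <;> by_cases c4 : w = (p.1, p.2 - 1) <;>
      simp_all [adj_inl_inl (show 2 ≤ n by omega) (show 2 ≤ m by omega)]
  have h2 : ∀ w : ZMod n × ZMod m, (if (UJL n m).Adj (inl p) (inr w) then (1:ℝ) else 0) =
      (if w = p then (1:ℝ) else 0) + (if w = (p.1 - 1, p.2) then 1 else 0) +
        (if w = (p.1, p.2 - 1) then 1 else 0) + (if w = (p.1 - 1, p.2 - 1) then 1 else 0) := by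
    intro w
    by_cases c1 : w = p <;> by_cases c2 : w = (p.1 - 1, p.2) <;>
      by_cases c3 : w = (p.1, p.2 - 1) <;> by_cases c4 : w = (p.1 - 1, p.2 - 1) <;>
      simp_all [adj_inl_inr]
  simp only [h1, h2]
  simp [Finset.sum_add_distrib, Finset.sum_ite_eq']
  norm_num

set_option maxHeartbeats 1000000 in
lemma degree_inr {n m : ℕ} [NeZero n] [NeZero m] (hn : 3 ≤ n) (hm : 3 ≤ m)
    (p : ZMod n × ZMod m) : ((UJL n m).degree (inr p) : ℝ) = 4 := by
  rw [degree_eq_sum, Fintype.sum_sum_type]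
  obtain ⟨e1, e2, e3, e4, e5, e6⟩ := face_neighbors_distinct' hn hm p
  have h1 : ∀ w : ZMod n × ZMod m, (if (UJL n m).Adj (inr p) (inl w) then (1:ℝ) else 0) =
      (if w = p then (1:ℝ) else 0) + (if w = (p.1 + 1, p.2) then 1 else 0) +
        (if w = (p.1, p.2 + 1) then 1 else 0) + (if w = (p.1 + 1, p.2 + 1) then 1 else 0) := by
    intro w
    by_cases c1 : w = p <;> by_cases c2 : w = (p.1 + 1, p.2) <;>
      by_cases c3 : w = (p.1, p.2 + 1) <;> by_cases c4 : w = (p.1 + 1, p.2 + 1) <;>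
      simp_all [adj_inr_inl]
  have h2 : ∀ w : ZMod n × ZMod m, (if (UJL n m).Adj (inr p) (inr w) then (1:ℝ) else 0) = 0 := by
    intro w; simp [adj_inr_inr p w]
  simp only [h1, h2]
  simp [Finset.sum_add_distrib, Finset.sum_ite_eq']
  norm_num

lemma ind4' {α : Type*} {q a b c d : α} (hab : a ≠ b) (hac : a ≠ c) (had : a ≠ d)
    (hbc : b ≠ c) (hbd : b ≠ d) (hcd : c ≠ d)
    [dO : Decidable (q = a ∨ q = b ∨ q = c ∨ q = d)] [dA : Decidable (q = a)]
    [dB : Decidable (q = b)] [dC : Decidable (q = c)] [dD : Decidable (q = d)] :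
    (if (q = a ∨ q = b ∨ q = c ∨ q = d) then (1 : ℝ) else 0) =
      (if q = a then (1:ℝ) else 0) + (if q = b then 1 else 0) +
        (if q = c then 1 else 0) + (if q = d then 1 else 0) := by
  by_cases h1 : q = a
  · rw [if_pos (Or.inl h1), if_pos h1, if_neg (fun h => hab (h1 ▸ h)),
      if_neg (fun h => hac (h1 ▸ h)), if_neg (fun h => had (h1 ▸ h))]
    norm_num
  by_cases h2 : q = b
  · rw [if_pos (Or.inr (Or.inl h2)), if_neg h1, if_pos h2,
      if_neg (fun h => hbc (h2 ▸ h)), if_neg (fun h => hbd (h2 ▸ h))]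
    norm_num
  by_cases h3 : q = c
  · rw [if_pos (Or.inr (Or.inr (Or.inl h3))), if_neg h1, if_neg h2, if_pos h3,
      if_neg (fun h => hcd (h3 ▸ h))]
    norm_num
  by_cases h4 : q = d
  · rw [if_pos (Or.inr (Or.inr (Or.inr h4))), if_neg h1, if_neg h2, if_neg h3, if_pos h4]
    norm_num
  · rw [if_neg (by tauto), if_neg h1, if_neg h2, if_neg h3, if_neg h4]
    norm_num

-- explicit Laplacian
def lapExplicit (n m : ℕ) : Matrix (UJLVert n m) (UJLVert n m) ℝ := fun x y =>
  match x, y with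
  | inl p, inl q =>
      (if q = p then (8 : ℝ) else 0) -
        ((if q = (p.1 + 1, p.2) then (1 : ℝ) else 0) + (if q = (p.1 - 1, p.2) then 1 else 0) +
          (if q = (p.1, p.2 + 1) then 1 else 0) + (if q = (p.1, p.2 - 1) then 1 else 0))
  | inl p, inr q =>
      -((if q = p then (1 : ℝ) else 0) + (if q = (p.1 - 1, p.2) then 1 else 0) +
          (if q = (p.1, p.2 - 1) then 1 else 0) + (if q = (p.1 - 1, p.2 - 1) then 1 else 0))
  | inr p, inl q =>
      -((if q = p then (1 : ℝ) else 0) + (if q = (p.1 + 1, p.2) then 1 else 0) +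
          (if q = (p.1, p.2 + 1) then 1 else 0) + (if q = (p.1 + 1, p.2 + 1) then 1 else 0))
  | inr p, inr q => if q = p then (4 : ℝ) else 0

set_option maxHeartbeats 1000000 in
lemma lap_eq {n m : ℕ} [NeZero n] [NeZero m] (hn : 3 ≤ n) (hm : 3 ≤ m) :
    laplacianUJL n m = lapExplicit n m := by
  funext x y
  rw [laplacianUJL, Matrix.sub_apply, SimpleGraph.adjMatrix_apply]
  cases x with
  | inl p =>
    cases y with
    | inl q =>
      obtain ⟨d1, d2, d3, d4, d5, d6⟩ := grid_neighbors_distinct hn hm p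
      have hAd : (if (UJL n m).Adj (inl p) (inl q) then (1:ℝ) else 0) =
          (if q = (p.1 + 1, p.2) then (1 : ℝ) else 0) + (if q = (p.1 - 1, p.2) then 1 else 0) +
            (if q = (p.1, p.2 + 1) then 1 else 0) + (if q = (p.1, p.2 - 1) then 1 else 0) := by
        rw [show ((UJL n m).Adj (inl p) (inl q)) = _ from
          propext (adj_inl_inl (by omega) (by omega) p q)]
        exact ind4' (dO := Classical.propDecidable _) d1 d2 d3 d4 d5 d6
      rw [hAd]
      show _ - _ = (if q = p then (8:ℝ) else 0) - _
      congr 1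
      by_cases h : q = p
      · subst h; rw [Matrix.diagonal_apply_eq, if_pos rfl, degree_inl hn hm]
      · rw [Matrix.diagonal_apply_ne' _ (by simp [h]), if_neg h]
    | inr q =>
      obtain ⟨e1, e2, e3, e4, e5, e6⟩ := face_neighbors_distinct hn hm p
      have hAd : (if (UJL n m).Adj (inl p) (inr q) then (1:ℝ) else 0) =
          (if q = p then (1 : ℝ) else 0) + (if q = (p.1 - 1, p.2) then 1 else 0) +
            (if q = (p.1, p.2 - 1) then 1 else 0) + (if q = (p.1 - 1, p.2 - 1) then 1 else 0) := by
        rw [show ((UJL n m).Adj (inl p) (inr q)) = _ from propext (adj_inl_inr p q)]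
        exact ind4' (dO := Classical.propDecidable _) e1 e2 e3 e4 e5 e6
      rw [hAd, Matrix.diagonal_apply_ne _ (by simp)]
      show _ = -_
      ring
  | inr p =>
    cases y with
    | inl q =>
      obtain ⟨e1, e2, e3, e4, e5, e6⟩ := face_neighbors_distinct' hn hm p
      have hAd : (if (UJL n m).Adj (inr p) (inl q) then (1:ℝ) else 0) =
          (if q = p then (1 : ℝ) else 0) + (if q = (p.1 + 1, p.2) then 1 else 0) +
            (if q = (p.1, p.2 + 1) then 1 else 0) + (if q = (p.1 + 1, p.2 + 1) then 1 else 0) := by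
        rw [show ((UJL n m).Adj (inr p) (inl q)) = _ from propext (adj_inr_inl p q)]
        exact ind4' (dO := Classical.propDecidable _) e1 e2 e3 e4 e5 e6
      rw [hAd, Matrix.diagonal_apply_ne _ (by simp)]
      show _ = -_
      ring
    | inr q =>
      rw [if_neg (adj_inr_inr p q)]
      show _ - _ = if q = p then (4:ℝ) else 0
      by_cases h : q = p
      · subst h; rw [Matrix.diagonal_apply_eq, if_pos rfl, degree_inr hn hm]; ring
      · rw [Matrix.diagonal_apply_ne' _ (by simp [h]), if_neg h]; ring

section fourier
variable (n m : ℕ) [NeZero n] [NeZero m]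

/-- character -/
def χf (q v : ZMod n × ZMod m) : ℂ :=
  ZMod.stdAddChar (v.1 * q.1) * ZMod.stdAddChar (v.2 * q.2)

lemma char_shift_add {N : ℕ} [NeZero N] (x y : ZMod N) :
    ZMod.stdAddChar (x + y) = ZMod.stdAddChar x * ZMod.stdAddChar y :=
  AddChar.map_add_eq_mul _ _ _

lemma char_shift_sub {N : ℕ} [NeZero N] (x y : ZMod N) :
    ZMod.stdAddChar (x - y) = ZMod.stdAddChar x * ZMod.stdAddChar (-y) := by
  rw [sub_eq_add_neg, AddChar.map_add_eq_mul]

def Pmat : Matrix (UJLVert n m) (UJLVert n m) ℂ := fun x y =>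
  match x, y with
  | inl v, inl q => χf n m q v
  | inr v, inr q => χf n m q v
  | _, _ => 0

def Qmat : Matrix (UJLVert n m) (UJLVert n m) ℂ := fun x y =>
  match x, y with
  | inl q, inl v => ZMod.stdAddChar (-(v.1 * q.1)) * ZMod.stdAddChar (-(v.2 * q.2))
  | inr q, inr v => ZMod.stdAddChar (-(v.1 * q.1)) * ZMod.stdAddChar (-(v.2 * q.2))
  | _, _ => 0

def aC (q : ZMod n × ZMod m) : ℝ :=
  8 - 2 * Real.cos (2 * Real.pi * q.1.val / n) - 2 * Real.cos (2 * Real.pi * q.2.val / m)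

def sC (q : ZMod n × ZMod m) : ℂ :=
  (1 + ZMod.stdAddChar q.1) * (1 + ZMod.stdAddChar q.2)

def sbC (q : ZMod n × ZMod m) : ℂ :=
  (1 + ZMod.stdAddChar (-q.1)) * (1 + ZMod.stdAddChar (-q.2))

def Bmat : Matrix (UJLVert n m) (UJLVert n m) ℂ := fun x y =>
  match x, y with
  | inl q', inl q => if q' = q then ((aC n m q : ℝ) : ℂ) else 0
  | inl q', inr q => if q' = q then -sbC n m q else 0
  | inr q', inl q => if q' = q then -sC n m q else 0
  | inr q', inr q => if q' = q then (4 : ℂ) else 0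

lemma aC_eq (q : ZMod n × ZMod m) :
    ((aC n m q : ℝ) : ℂ) = 8 - (ZMod.stdAddChar q.1 + ZMod.stdAddChar (-q.1)) -
      (ZMod.stdAddChar q.2 + ZMod.stdAddChar (-q.2)) := by
  rw [char_add_neg, char_add_neg, aC]
  push_cast
  ring

set_option maxHeartbeats 1000000 in
lemma lap_mul_P :
    (lapExplicit n m).map (Complex.ofReal) * Pmat n m = Pmat n m * Bmat n m := by
  funext x y
  rw [Matrix.mul_apply, Matrix.mul_apply, Fintype.sum_sum_type, Fintype.sum_sum_type]
  cases x with
  | inl v =>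
    cases y with
    | inl q =>
      simp only [lapExplicit, Pmat, Bmat, Matrix.map_apply, χf, mul_zero, zero_mul, mul_ite,
        Complex.ofReal_sub, Complex.ofReal_add, Complex.ofReal_neg, apply_ite Complex.ofReal,
        Complex.ofReal_ofNat, Complex.ofReal_one, Complex.ofReal_zero, sub_mul, add_mul,
        ite_mul, one_mul, neg_mul, Finset.sum_sub_distrib, Finset.sum_add_distrib,
        Finset.sum_const_zero, Finset.sum_ite_eq', Finset.mem_univ, if_true, add_zero, zero_add,
        sub_zero]
      simp only [char_shift_add, char_shift_sub, char_shift_add, char_shift_sub]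
      rw [aC_eq]
      ring
    | inr q =>
      simp only [lapExplicit, Pmat, Bmat, Matrix.map_apply, χf, mul_zero, zero_mul, mul_ite,
        Complex.ofReal_sub, Complex.ofReal_add, Complex.ofReal_neg, apply_ite Complex.ofReal,
        Complex.ofReal_ofNat, Complex.ofReal_one, Complex.ofReal_zero, sub_mul, add_mul,
        ite_mul, one_mul, neg_mul, Finset.sum_sub_distrib, Finset.sum_add_distrib,
        Finset.sum_const_zero, Finset.sum_neg_distrib, Finset.sum_ite_eq', Finset.mem_univ,
        if_true, add_zero, zero_add, sub_zero]
      simp only [char_shift_sub]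
      rw [sbC]
      ring
  | inr v =>
    cases y with
    | inl q =>
      simp only [lapExplicit, Pmat, Bmat, Matrix.map_apply, χf, mul_zero, zero_mul, mul_ite,
        Complex.ofReal_sub, Complex.ofReal_add, Complex.ofReal_neg, apply_ite Complex.ofReal,
        Complex.ofReal_ofNat, Complex.ofReal_one, Complex.ofReal_zero, sub_mul, add_mul,
        ite_mul, one_mul, neg_mul, Finset.sum_sub_distrib, Finset.sum_add_distrib,
        Finset.sum_const_zero, Finset.sum_neg_distrib, Finset.sum_ite_eq', Finset.mem_univ,
        if_true, add_zero, zero_add, sub_zero]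
      simp only [char_shift_add]
      rw [sC]
      ring
    | inr q =>
      simp only [lapExplicit, Pmat, Bmat, Matrix.map_apply, χf, mul_zero, zero_mul, mul_ite,
        apply_ite Complex.ofReal, Complex.ofReal_ofNat, Complex.ofReal_zero, ite_mul,
        Finset.sum_const_zero, Finset.sum_ite_eq', Finset.mem_univ, if_true, add_zero, zero_add]
      ring
end fourier

section invert
variable (n m : ℕ) [NeZero n] [NeZero m]

set_option maxHeartbeats 1000000 in
lemma P_mul_Q : Pmat n m * Qmat n m = (((n * m : ℕ) : ℂ)) • (1 : Matrix (UJLVert n m) (UJLVert n m) ℂ) := by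
  have key : ∀ v w : ZMod n × ZMod m,
      (∑ q : ZMod n × ZMod m, χf n m q v *
        (ZMod.stdAddChar (-(w.1 * q.1)) * ZMod.stdAddChar (-(w.2 * q.2)))) =
      if v = w then ((n * m : ℕ) : ℂ) else 0 := by
    intro v w
    have h1 : ∀ q : ZMod n × ZMod m, χf n m q v *
        (ZMod.stdAddChar (-(w.1 * q.1)) * ZMod.stdAddChar (-(w.2 * q.2))) =
        ZMod.stdAddChar ((v.1 - w.1) * q.1) * ZMod.stdAddChar ((v.2 - w.2) * q.2) := by
      intro q
      rw [χf, show (v.1 - w.1) * q.1 = v.1 * q.1 + -(w.1 * q.1) by ring,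
        show (v.2 - w.2) * q.2 = v.2 * q.2 + -(w.2 * q.2) by ring,
        AddChar.map_add_eq_mul, AddChar.map_add_eq_mul]
      ring
    simp only [h1]
    rw [Fintype.sum_prod_type]
    simp only [← Finset.mul_sum]
    rw [← Finset.sum_mul, zmod_char_sum, zmod_char_sum]
    by_cases h1 : v.1 = w.1 <;> by_cases h2 : v.2 = w.2 <;>
      simp [sub_eq_zero, h1, h2, Prod.ext_iff] <;> push_cast <;> ring
  funext x y
  rw [Matrix.mul_apply, Fintype.sum_sum_type]
  cases x with
  | inl v =>
    cases y with
    | inl w =>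
      simp only [Pmat, Qmat, mul_zero, zero_mul, Finset.sum_const_zero, add_zero]
      rw [key v w, Matrix.smul_apply, Matrix.one_apply]
      by_cases h : v = w <;> simp [h]
    | inr w =>
      simp only [Pmat, Qmat, mul_zero, zero_mul, Finset.sum_const_zero, add_zero]
      simp [Matrix.one_apply]
  | inr v =>
    cases y with
    | inl w =>
      simp only [Pmat, Qmat, mul_zero, zero_mul, Finset.sum_const_zero, add_zero]
      simp [Matrix.one_apply]
    | inr w =>
      simp only [Pmat, Qmat, mul_zero, zero_mul, Finset.sum_const_zero, zero_add]
      rw [key v w, Matrix.smul_apply, Matrix.one_apply]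
      by_cases h : v = w <;> simp [h]

def Pmat_invertible (n m : ℕ) [NeZero n] [NeZero m] : Invertible (Pmat n m) := by
  have hnm : ((n * m : ℕ) : ℂ) ≠ 0 := by
    push_cast
    exact mul_ne_zero (Nat.cast_ne_zero.2 (NeZero.ne n)) (Nat.cast_ne_zero.2 (NeZero.ne m))
  apply invertibleOfRightInverse _ ((((n * m : ℕ) : ℂ))⁻¹ • Qmat n m)
  rw [Matrix.mul_smul, P_mul_Q, smul_smul, inv_mul_cancel₀ hnm, one_smul]

/-- similar matrices have the same charpoly -/
lemma charpoly_of_conj {V : Type*} [Fintype V] [DecidableEq V]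
    (L P B : Matrix V V ℂ) (hP : Invertible P) (h : L * P = P * B) :
    L.charpoly = B.charpoly := by
  have h2 : L.charmatrix * P.map Polynomial.C = P.map Polynomial.C * B.charmatrix := by
    rw [Matrix.charmatrix, Matrix.charmatrix, sub_mul, mul_sub]
    congr 1
    · exact (Matrix.scalar_commute (Polynomial.X : ℂ[X]) (fun r => Commute.all _ _)
        (P.map Polynomial.C)).eq
    · rw [RingHom.mapMatrix_apply, RingHom.mapMatrix_apply, ← Matrix.map_mul, h, Matrix.map_mul]
  have h3 := congrArg Matrix.det h2
  rw [Matrix.det_mul, Matrix.det_mul] at h3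
  have h4 : (P.map Polynomial.C).det ≠ 0 := by
    rw [show P.map ⇑Polynomial.C = (Polynomial.C : ℂ →+* ℂ[X]).mapMatrix P from rfl,
      ← RingHom.map_det]
    simpa using (Matrix.isUnit_det_of_invertible P).ne_zero
  rw [Matrix.charpoly, Matrix.charpoly]
  rw [mul_comm] at h3
  exact (mul_left_cancel₀ h4 h3.symm).symm

-- real eigenvalue functions
def Fv (x y : ℝ) : ℝ := 6 - Real.cos x - Real.cos y
def Hv (x y : ℝ) : ℝ := 7 - 3 * Real.cos x - 3 * Real.cos y - Real.cos x * Real.cos y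
def discr (x y : ℝ) : ℝ := Fv x y ^ 2 - 4 * Hv x y
def μp (x y : ℝ) : ℝ := Fv x y + Real.sqrt (discr x y)
def μm (x y : ℝ) : ℝ := Fv x y - Real.sqrt (discr x y)
def gfun (x y : ℝ) : ℝ := Real.sqrt (μp x y) + Real.sqrt (μm x y)

lemma discr_nonneg (x y : ℝ) : 0 ≤ discr x y := by
  have h1 : 0 ≤ (1 + Real.cos x) * (1 + Real.cos y) := by
    have := Real.neg_one_le_cos x; have := Real.neg_one_le_cos y
    nlinarith
  have h2 : 0 ≤ (1 - Real.cos x) * (1 - Real.cos y) := by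
    have := Real.cos_le_one x; have := Real.cos_le_one y
    nlinarith
  have h3 := sq_nonneg (Real.cos x + Real.cos y)
  unfold _root_.discr Fv Hv
  nlinarith

lemma mu_sum (x y : ℝ) : μp x y + μm x y = 2 * Fv x y := by unfold μp μm; ring

lemma mu_prod (x y : ℝ) : μp x y * μm x y = 4 * Hv x y := by
  have h := Real.sq_sqrt (discr_nonneg x y)
  unfold μp μm
  unfold _root_.discr at h ⊢
  nlinarith [h]

section blocks
variable (n m : ℕ) [NeZero n] [NeZero m]

def blkM (q : ZMod n × ZMod m) : Matrix (Fin 2) (Fin 2) ℂ :=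
  !![((aC n m q : ℝ) : ℂ), -sbC n m q; -sC n m q, 4]

def eqv : (Fin 2 × (ZMod n × ZMod m)) ≃ UJLVert n m where
  toFun x := if x.1 = 0 then inl x.2 else inr x.2
  invFun := Sum.elim (fun q => ((0 : Fin 2), q)) (fun q => ((1 : Fin 2), q))
  left_inv := by rintro ⟨i, q⟩; fin_cases i <;> simp
  right_inv := by rintro (q | q) <;> simp

lemma Bmat_eq_reindex :
    Bmat n m = Matrix.reindex (eqv n m) (eqv n m) (Matrix.blockDiagonal (blkM n m)) := by
  funext x y
  rw [Matrix.reindex_apply, Matrix.submatrix_apply]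
  cases x with
  | inl q' =>
    cases y with
    | inl q =>
      rw [show (eqv n m).symm (inl q') = ((0 : Fin 2), q') from rfl,
        show (eqv n m).symm (inl q) = ((0 : Fin 2), q) from rfl,
        Matrix.blockDiagonal_apply]
      show (if q' = q then ((aC n m q : ℝ) : ℂ) else 0) = _
      by_cases h : q' = q <;> simp [h, blkM]
    | inr q =>
      rw [show (eqv n m).symm (inl q') = ((0 : Fin 2), q') from rfl,
        show (eqv n m).symm (inr q) = ((1 : Fin 2), q) from rfl,
        Matrix.blockDiagonal_apply]
      show (if q' = q then -sbC n m q else 0) = _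
      by_cases h : q' = q <;> simp [h, blkM]
  | inr q' =>
    cases y with
    | inl q =>
      rw [show (eqv n m).symm (inr q') = ((1 : Fin 2), q') from rfl,
        show (eqv n m).symm (inl q) = ((0 : Fin 2), q) from rfl,
        Matrix.blockDiagonal_apply]
      show (if q' = q then -sC n m q else 0) = _
      by_cases h : q' = q <;> simp [h, blkM]
    | inr q =>
      rw [show (eqv n m).symm (inr q') = ((1 : Fin 2), q') from rfl,
        show (eqv n m).symm (inr q) = ((1 : Fin 2), q) from rfl,
        Matrix.blockDiagonal_apply]
      show (if q' = q then (4 : ℂ) else 0) = _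
      by_cases h : q' = q <;> simp [h, blkM]

lemma charmatrix_blockDiagonal {o R : Type*} [DecidableEq o] [Fintype o] [CommRing R]
    (d : o → Matrix (Fin 2) (Fin 2) R) :
    Matrix.charmatrix (Matrix.blockDiagonal d) =
      Matrix.blockDiagonal (fun k => Matrix.charmatrix (d k)) := by
  ext ⟨i, k⟩ ⟨j, k'⟩
  by_cases h : k = k'
  · subst h
    by_cases hij : i = j
    · subst hij
      rw [Matrix.charmatrix_apply_eq, Matrix.blockDiagonal_apply_eq,
        Matrix.blockDiagonal_apply_eq, Matrix.charmatrix_apply_eq]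
    · rw [Matrix.charmatrix_apply_ne _ _ _ (by simp [Prod.ext_iff, hij]),
        Matrix.blockDiagonal_apply_eq, Matrix.blockDiagonal_apply_eq,
        Matrix.charmatrix_apply_ne _ _ _ hij]
  · rw [Matrix.charmatrix_apply_ne _ _ _ (by simp [Prod.ext_iff, h]),
      Matrix.blockDiagonal_apply_ne _ _ _ h, Matrix.blockDiagonal_apply_ne _ _ _ h]
    simp

lemma charpoly_blockDiagonal {o R : Type*} [DecidableEq o] [Fintype o] [CommRing R]
    (d : o → Matrix (Fin 2) (Fin 2) R) :
    (Matrix.blockDiagonal d).charpoly = ∏ k : o, (d k).charpoly := by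
  rw [Matrix.charpoly, charmatrix_blockDiagonal, Matrix.det_blockDiagonal]
  rfl

lemma sbC_mul_sC (q : ZMod n × ZMod m) :
    sbC n m q * sC n m q =
      (((2 + 2 * Real.cos (2 * Real.pi * q.1.val / n)) *
        (2 + 2 * Real.cos (2 * Real.pi * q.2.val / m)) : ℝ) : ℂ) := by
  have h1 : ∀ (N : ℕ) [NeZero N], ∀ j : ZMod N,
      (1 + ZMod.stdAddChar (-j)) * (1 + ZMod.stdAddChar j) =
        ((2 + 2 * Real.cos (2 * Real.pi * j.val / N) : ℝ) : ℂ) := by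
    intro N _ j
    have h2 : ZMod.stdAddChar (-j) * ZMod.stdAddChar j = 1 := by
      rw [← AddChar.map_add_eq_mul]; simp
    have h3 := char_add_neg N j
    push_cast at h3 ⊢
    linear_combination h2 + h3
  rw [sbC, sC, show (1 + ZMod.stdAddChar (-q.1)) * (1 + ZMod.stdAddChar (-q.2)) *
      ((1 + ZMod.stdAddChar q.1) * (1 + ZMod.stdAddChar q.2)) =
      ((1 + ZMod.stdAddChar (-q.1)) * (1 + ZMod.stdAddChar q.1)) *
        ((1 + ZMod.stdAddChar (-q.2)) * (1 + ZMod.stdAddChar q.2)) by ring,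
    h1, h1]
  push_cast
  ring

lemma blkM_charpoly (q : ZMod n × ZMod m) :
    (blkM n m q).charpoly =
      (((X - C (μp (2 * Real.pi * q.1.val / n) (2 * Real.pi * q.2.val / m))) *
        (X - C (μm (2 * Real.pi * q.1.val / n) (2 * Real.pi * q.2.val / m)))) : ℝ[X]).map
          Complex.ofRealHom := by
  set x := 2 * Real.pi * (q.1.val : ℝ) / n with hx
  set y := 2 * Real.pi * (q.2.val : ℝ) / m with hy
  rw [Matrix.charpoly, Matrix.det_fin_two]
  rw [Matrix.charmatrix_apply_eq, Matrix.charmatrix_apply_eq,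
    Matrix.charmatrix_apply_ne _ _ _ (by decide), Matrix.charmatrix_apply_ne _ _ _ (by decide)]
  have hb00 : blkM n m q 0 0 = ((aC n m q : ℝ) : ℂ) := by simp [blkM]
  have hb01 : blkM n m q 0 1 = -sbC n m q := by simp [blkM]
  have hb10 : blkM n m q 1 0 = -sC n m q := by simp [blkM]
  have hb11 : blkM n m q 1 1 = (4 : ℂ) := by simp [blkM]
  rw [hb00, hb01, hb10, hb11]
  rw [Polynomial.map_mul, Polynomial.map_sub, Polynomial.map_sub, Polynomial.map_X,
    Polynomial.map_C, Polynomial.map_C]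
  have hsumR : μp x y + μm x y = aC n m q + 4 := by
    rw [mu_sum]
    unfold Fv aC
    rw [← hx, ← hy]
    ring
  have hprodR : μp x y * μm x y = aC n m q * 4 -
      ((2 + 2 * Real.cos (2 * Real.pi * q.1.val / n)) *
        (2 + 2 * Real.cos (2 * Real.pi * q.2.val / m))) := by
    rw [mu_prod]
    unfold Hv aC
    rw [← hx, ← hy]
    ring
  have hsum : ((μp x y : ℝ) : ℂ) + ((μm x y : ℝ) : ℂ) = ((aC n m q : ℝ) : ℂ) + 4 := by
    rw [← Complex.ofReal_add, hsumR]
    push_cast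
    ring
  have hprod : ((μp x y : ℝ) : ℂ) * ((μm x y : ℝ) : ℂ) =
      ((aC n m q : ℝ) : ℂ) * 4 - sbC n m q * sC n m q := by
    rw [← Complex.ofReal_mul, hprodR, sbC_mul_sC]
    push_cast
    ring
  have e1 : C (((μp x y : ℝ) : ℂ)) + C (((μm x y : ℝ) : ℂ)) =
      C (((aC n m q : ℝ) : ℂ)) + C (4 : ℂ) := by
    rw [← Polynomial.C_add, ← Polynomial.C_add, hsum]
  have e2 : C (((μp x y : ℝ) : ℂ)) * C (((μm x y : ℝ) : ℂ)) =
      C (((aC n m q : ℝ) : ℂ)) * C (4 : ℂ) - C (sbC n m q * sC n m q) := by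
    rw [← Polynomial.C_mul, ← Polynomial.C_mul, ← Polynomial.C_sub, hprod]
  have e3 : C (sbC n m q) * C (sC n m q) = C (sbC n m q * sC n m q) := by
    rw [Polynomial.C_mul]
  simp only [Complex.ofRealHom_eq_coe, map_neg, neg_neg]
  linear_combination (Polynomial.X : ℂ[X]) * e1 - e2 - e3

end blocks

lemma charpoly_UJL (n m : ℕ) [NeZero n] [NeZero m] (hn : 3 ≤ n) (hm : 3 ≤ m) :
    (laplacianUJL n m).charpoly = ∏ q : ZMod n × ZMod m,
      ((X - C (μp (2 * Real.pi * q.1.val / n) (2 * Real.pi * q.2.val / m))) *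
        (X - C (μm (2 * Real.pi * q.1.val / n) (2 * Real.pi * q.2.val / m)))) := by
  apply Polynomial.map_injective (Complex.ofRealHom) Complex.ofReal_injective
  rw [← Matrix.charpoly_map]
  have hmap : (laplacianUJL n m).map Complex.ofRealHom = (lapExplicit n m).map Complex.ofReal := by
    rw [lap_eq hn hm]; rfl
  rw [hmap, charpoly_of_conj _ (Pmat n m) (Bmat n m) (Pmat_invertible n m) (lap_mul_P n m)]
  rw [Bmat_eq_reindex, Matrix.charpoly_reindex, charpoly_blockDiagonal, Polynomial.map_prod]
  exact Finset.prod_congr rfl (fun q _ => blkM_charpoly n m q)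

lemma roots_sqrt_sum {ι : Type*} [Fintype ι] (f g : ι → ℝ) :
    (((∏ q : ι, ((X - C (f q)) * (X - C (g q)))).roots.map Real.sqrt).sum)
      = ∑ q : ι, (Real.sqrt (f q) + Real.sqrt (g q)) := by
  have hne : ∀ q ∈ (Finset.univ : Finset ι), ((X - C (f q)) * (X - C (g q))) ≠ 0 :=
    fun q _ => ((Polynomial.monic_X_sub_C (f q)).mul (Polynomial.monic_X_sub_C (g q))).ne_zero
  rw [Polynomial.roots_prod _ _ (Finset.prod_ne_zero_iff.2 hne)]
  rw [Multiset.map_bind, Multiset.sum_bind]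
  have : ∀ q : ι, (((X - C (f q)) * (X - C (g q))).roots.map Real.sqrt).sum =
      Real.sqrt (f q) + Real.sqrt (g q) := by
    intro q
    rw [Polynomial.roots_mul (hne q (Finset.mem_univ q)), Polynomial.roots_X_sub_C,
      Polynomial.roots_X_sub_C]
    simp
  simp only [this]
  rfl

lemma zmod_val_sum {N : ℕ} [NeZero N] (f : ℕ → ℝ) :
    ∑ i : ZMod N, f i.val = ∑ j ∈ Finset.range N, f j := by
  refine Finset.sum_bij' (fun (i : ZMod N) _ => i.val) (fun j _ => (j : ZMod N)) ?_ ?_ ?_ ?_ ?_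
  · intro a _; exact Finset.mem_range.2 (ZMod.val_lt a)
  · intro a _; exact Finset.mem_univ _
  · intro a _; exact ZMod.natCast_rightInverse a
  · intro a ha; exact ZMod.val_cast_of_lt (Finset.mem_range.1 ha)
  · intro a _; rfl

lemma LEL_eq (n m : ℕ) (hn : 3 ≤ n) (hm : 3 ≤ m) :
    LEL_UJL n m = ∑ j ∈ Finset.range n, ∑ k ∈ Finset.range m,
      gfun (2 * Real.pi * j / n) (2 * Real.pi * k / m) := by
  haveI : NeZero n := ⟨by omega⟩
  haveI : NeZero m := ⟨by omega⟩
  rw [LEL_UJL, dif_neg (by omega : ¬ (n = 0 ∨ m = 0))]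
  rw [charpoly_UJL n m hn hm, roots_sqrt_sum]
  rw [Fintype.sum_prod_type]
  rw [show (∑ a : ZMod n, ∑ b : ZMod m,
      (Real.sqrt (μp (2 * Real.pi * a.val / n) (2 * Real.pi * b.val / m)) +
        Real.sqrt (μm (2 * Real.pi * a.val / n) (2 * Real.pi * b.val / m)))) =
      ∑ a : ZMod n, ∑ b : ZMod m, gfun (2 * Real.pi * a.val / n) (2 * Real.pi * b.val / m) from
    rfl]
  rw [zmod_val_sum (fun j => ∑ b : ZMod m, gfun (2 * Real.pi * j / n) (2 * Real.pi * b.val / m))]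
  exact Finset.sum_congr rfl fun j _ =>
    zmod_val_sum (fun k => gfun (2 * Real.pi * j / n) (2 * Real.pi * k / m))

-- Riemann sums of continuous functions converge to the integral
lemma riemann_tendsto (f : ℝ → ℝ) (hf : Continuous f) {b : ℝ} (hb : 0 < b) :
    Tendsto (fun N : ℕ => (b / N) * ∑ j ∈ Finset.range N, f (b * j / N)) atTop
      (𝓝 (∫ x in (0:ℝ)..b, f x)) := by
  rw [Metric.tendsto_atTop]
  intro ε hε
  have hb1 : (0:ℝ) < b + 1 := by linarith
  set ε' := ε / (b + 1) with hε'def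
  have hε' : 0 < ε' := div_pos hε hb1
  have huc := (isCompact_Icc : IsCompact (Set.Icc (0:ℝ) b)).uniformContinuousOn_of_continuous
    hf.continuousOn
  rw [Metric.uniformContinuousOn_iff] at huc
  obtain ⟨δ, hδ, hδ'⟩ := huc ε' hε'
  obtain ⟨N₁, hN₁⟩ := exists_nat_gt (b / δ)
  refine ⟨N₁ + 1, fun N hN => ?_⟩
  have hN0 : 0 < N := by omega
  have hNpos : (0:ℝ) < N := by exact_mod_cast hN0
  have hmesh : b / N < δ := by
    rw [div_lt_iff₀ hNpos]
    have h1 : b / δ < (N : ℝ) := lt_of_lt_of_le hN₁ (by exact_mod_cast (by omega : N₁ ≤ N))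
    calc b = (b / δ) * δ := by field_simp
    _ < N * δ := mul_lt_mul_of_pos_right h1 hδ
    _ = δ * N := by ring
  set a : ℕ → ℝ := fun j => b * j / N with ha
  have ha0 : a 0 = 0 := by simp [ha]
  have haN : a N = b := by rw [ha]; field_simp
  have hstep : ∀ j : ℕ, a (j + 1) - a j = b / N := by
    intro j; rw [ha]; push_cast; field_simp; ring
  have hmono : ∀ j : ℕ, a j ≤ a (j + 1) := by
    intro j
    have := hstep j
    have h2 : 0 ≤ b / N := le_of_lt (div_pos hb hNpos)
    linarith
  have hai : ∀ j : ℕ, j ≤ N → a j ∈ Set.Icc (0:ℝ) b := by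
    intro j hj
    constructor
    · rw [ha]; positivity
    · rw [ha, div_le_iff₀ hNpos]
      have : (j : ℝ) ≤ (N : ℝ) := by exact_mod_cast hj
      nlinarith
  have hInt : ∫ x in (0:ℝ)..b, f x = ∑ j ∈ Finset.range N, ∫ x in a j..a (j+1), f x := by
    rw [intervalIntegral.sum_integral_adjacent_intervals
      (fun k _ => hf.intervalIntegrable _ _), ha0, haN]
  have key : ∀ j ∈ Finset.range N, |(b / N) * f (a j) - ∫ x in a j..a (j+1), f x| ≤ ε' * (b / N) := by
    intro j hj
    have hjN : j < N := Finset.mem_range.1 hj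
    have hsub : (b / N) * f (a j) - ∫ x in a j..a (j+1), f x
        = ∫ x in a j..a (j+1), (f (a j) - f x) := by
      rw [intervalIntegral.integral_sub (intervalIntegrable_const) (hf.intervalIntegrable _ _),
        intervalIntegral.integral_const, smul_eq_mul, hstep j]
    rw [hsub]
    have hbound : ∀ x ∈ Set.uIoc (a j) (a (j+1)), ‖f (a j) - f x‖ ≤ ε' := by
      intro x hx
      rw [Set.uIoc_of_le (hmono j)] at hx
      obtain ⟨hx1, hx2⟩ := hx
      have haj : a j ∈ Set.Icc (0:ℝ) b := hai j (by omega)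
      have haj1 : a (j+1) ∈ Set.Icc (0:ℝ) b := hai (j+1) (by omega)
      have hxI : x ∈ Set.Icc (0:ℝ) b := ⟨le_trans haj.1 (le_of_lt hx1), le_trans hx2 haj1.2⟩
      have hdist : dist (a j) x < δ := by
        rw [Real.dist_eq, abs_sub_comm, _root_.abs_of_nonneg (by linarith)]
        have := hstep j
        linarith
      exact le_of_lt ((by simpa [Real.dist_eq] using hδ' (a j) haj x hxI hdist))
    have h3 := intervalIntegral.norm_integral_le_of_norm_le_const hbound
    rw [hstep j, _root_.abs_of_nonneg (le_of_lt (div_pos hb hNpos))] at h3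
    exact h3
  have hSsum : (b / N) * ∑ j ∈ Finset.range N, f (b * j / N)
      = ∑ j ∈ Finset.range N, (b / N) * f (a j) := by
    rw [Finset.mul_sum]
  rw [Real.dist_eq, hSsum, hInt, ← Finset.sum_sub_distrib]
  calc |∑ j ∈ Finset.range N, ((b / N) * f (a j) - ∫ x in a j..a (j+1), f x)|
      ≤ ∑ j ∈ Finset.range N, |(b / N) * f (a j) - ∫ x in a j..a (j+1), f x| :=
        Finset.abs_sum_le_sum_abs _ _
    _ ≤ ∑ _j ∈ Finset.range N, ε' * (b / N) := Finset.sum_le_sum key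
    _ = ε' * b := by rw [Finset.sum_const, Finset.card_range, nsmul_eq_mul]; field_simp
    _ < ε := by
        rw [hε'def, div_mul_eq_mul_div, div_lt_iff₀ hb1]
        nlinarith

lemma gfun_cont : Continuous (fun p : ℝ × ℝ => gfun p.1 p.2) := by
  unfold gfun μp μm _root_.discr Fv Hv
  have hc1 : Continuous fun p : ℝ × ℝ => Real.cos p.1 := Real.continuous_cos.comp continuous_fst
  have hc2 : Continuous fun p : ℝ × ℝ => Real.cos p.2 := Real.continuous_cos.comp continuous_snd
  fun_prop

def Gfun (y : ℝ) : ℝ := ∫ x in (0:ℝ)..(2 * Real.pi), gfun x y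

lemma Gfun_cont : Continuous Gfun := by
  have h : Continuous (Function.uncurry (fun y x => gfun x y)) := by
    have : Function.uncurry (fun y x => gfun x y) =
        (fun p : ℝ × ℝ => gfun p.1 p.2) ∘ Prod.swap := rfl
    rw [this]
    exact gfun_cont.comp continuous_swap
  exact intervalIntegral.continuous_parametric_intervalIntegral_of_continuous' h 0 (2 * Real.pi)

lemma gfun_symm (x y : ℝ) : gfun x y = gfun y x := by
  unfold gfun μp μm _root_.discr Fv Hv
  ring_nf

def Lseq (M : ℕ) : ℝ := (1 / (4 * Real.pi * M)) * ∑ k ∈ Finset.range M, Gfun (2 * Real.pi * k / M)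

lemma part1 (M : ℕ) (hM : 3 ≤ M) :
    Tendsto (fun n : ℕ => LEL_UJL n M / (2 * (M : ℝ) * (n : ℝ))) atTop (𝓝 (Lseq M)) := by
  have hint : ∀ k : ℕ, Continuous (fun x => gfun x (2 * Real.pi * k / M)) := by
    intro k
    have heq : (fun x => gfun x (2 * Real.pi * k / M)) =
        (fun p : ℝ × ℝ => gfun p.1 p.2) ∘ (fun x => (x, 2 * Real.pi * k / M)) := rfl
    rw [heq]
    exact gfun_cont.comp (continuous_id.prodMk continuous_const)
  have hfm : Continuous (fun x => ∑ k ∈ Finset.range M, gfun x (2 * Real.pi * k / M)) :=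
    continuous_finset_sum _ (fun k _ => hint k)
  have hR := (riemann_tendsto _ hfm Real.two_pi_pos).const_mul (1 / (4 * Real.pi * M))
  have hval : (1 / (4 * Real.pi * M)) * ∫ x in (0:ℝ)..(2 * Real.pi),
      ∑ k ∈ Finset.range M, gfun x (2 * Real.pi * k / M) = Lseq M := by
    rw [intervalIntegral.integral_finset_sum
      (fun k _ => (hint k).intervalIntegrable _ _), Lseq]
    rfl
  rw [hval] at hR
  refine Filter.Tendsto.congr' ?_ hR
  filter_upwards [Filter.eventually_ge_atTop 3] with n hn
  rw [LEL_eq n M hn hM]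
  have hπ := Real.pi_ne_zero
  have hn0 : (n : ℝ) ≠ 0 := Nat.cast_ne_zero.2 (by omega)
  have hM0 : (M : ℝ) ≠ 0 := Nat.cast_ne_zero.2 (by omega)
  generalize (∑ j ∈ Finset.range n, ∑ k ∈ Finset.range M,
      gfun (2 * Real.pi * j / n) (2 * Real.pi * k / M)) = S
  field_simp
  ring

lemma part2 : Tendsto Lseq atTop
    (𝓝 ((1 / (8 * Real.pi ^ 2)) * ∫ y in (0:ℝ)..(2 * Real.pi), Gfun y)) := by
  have hR := (riemann_tendsto Gfun Gfun_cont Real.two_pi_pos).const_mul (1 / (8 * Real.pi ^ 2))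
  refine Filter.Tendsto.congr' ?_ hR
  filter_upwards [Filter.eventually_ge_atTop 1] with M hM
  have hπ := Real.pi_ne_zero
  have hM0 : (M : ℝ) ≠ 0 := Nat.cast_ne_zero.2 (by omega)
  rw [Lseq]
  generalize (∑ k ∈ Finset.range M, Gfun (2 * Real.pi * k / M)) = S
  field_simp
  ring



/-- The iterated limit `lim_{m→∞} lim_{n→∞} LEL(UJL(n,m))/(2mn)` exists and
equals `(1/(8π²)) ∫₀^{2π} ∫₀^{2π} (√(F + √(F² − 4H)) + √(F − √(F² − 4H))) dx dy`, where
`F(x,y) = 6 − cos x − cos y` and `H(x,y) = 7 − 3cos x − 3cos y − cos x · cos y`. -/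
theorem LEL_UJL_asymptotics :
    ∃ L : ℕ → ℝ,
      (∀ m : ℕ, 3 ≤ m →
        Filter.Tendsto (fun n : ℕ => LEL_UJL n m / (2 * (m : ℝ) * (n : ℝ)))
          Filter.atTop (nhds (L m))) ∧
      Filter.Tendsto L Filter.atTop (nhds
        ((1 / (8 * Real.pi ^ 2)) *
          ∫ x in (0 : ℝ)..(2 * Real.pi), ∫ y in (0 : ℝ)..(2 * Real.pi),
            (Real.sqrt ((6 - Real.cos x - Real.cos y) +
                Real.sqrt ((6 - Real.cos x - Real.cos y) ^ 2 -
                  4 * (7 - 3 * Real.cos x - 3 * Real.cos y - Real.cos x * Real.cos y))) +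
              Real.sqrt ((6 - Real.cos x - Real.cos y) -
                Real.sqrt ((6 - Real.cos x - Real.cos y) ^ 2 -
                  4 * (7 - 3 * Real.cos x - 3 * Real.cos y - Real.cos x * Real.cos y)))))) := by
  refine ⟨Lseq, fun M hM => part1 M hM, ?_⟩
  have hkey : ∀ x : ℝ, (∫ y in (0 : ℝ)..(2 * Real.pi),
      (Real.sqrt ((6 - Real.cos x - Real.cos y) +
          Real.sqrt ((6 - Real.cos x - Real.cos y) ^ 2 -
            4 * (7 - 3 * Real.cos x - 3 * Real.cos y - Real.cos x * Real.cos y))) +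
        Real.sqrt ((6 - Real.cos x - Real.cos y) -
          Real.sqrt ((6 - Real.cos x - Real.cos y) ^ 2 -
            4 * (7 - 3 * Real.cos x - 3 * Real.cos y - Real.cos x * Real.cos y)))))
      = Gfun x := by
    intro x
    have h1 : (∫ y in (0 : ℝ)..(2 * Real.pi), gfun x y) = Gfun x :=
      intervalIntegral.integral_congr (fun y _ => gfun_symm x y)
    exact h1
  have h2 : (∫ x in (0 : ℝ)..(2 * Real.pi), ∫ y in (0 : ℝ)..(2 * Real.pi),
      (Real.sqrt ((6 - Real.cos x - Real.cos y) +
          Real.sqrt ((6 - Real.cos x - Real.cos y) ^ 2 -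
            4 * (7 - 3 * Real.cos x - 3 * Real.cos y - Real.cos x * Real.cos y))) +
        Real.sqrt ((6 - Real.cos x - Real.cos y) -
          Real.sqrt ((6 - Real.cos x - Real.cos y) ^ 2 -
            4 * (7 - 3 * Real.cos x - 3 * Real.cos y - Real.cos x * Real.cos y)))))
      = ∫ y in (0 : ℝ)..(2 * Real.pi), Gfun y :=
    intervalIntegral.integral_congr (fun x _ => hkey x)
  rw [h2]
  exact part2
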